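/- An ELU ontology O has infinitely many pairwise non-logically-equivalent O-generatable EL concepts if and only if for every n ≥ 0 there exists a concept ∃r.D in sub(O) occurring on the right-hand side of some inclusion in O and a sequence r₁,…,rₙ of role names from O such that O ⊨ D ⊑ ∃r₁.⋯.∃rₙ.⊤. -/

import Mathlib

namespace DL

/- Basic description-logic framework: concepts, interpretations, ontologies. -/

inductive Concept (Cn R : Type) : Type where
  | top  : Concept Cn R
  | bot  : Concept Cn R
  | name : Cn → Concept Cn R
  | neg  : Concept Cn R → Concept Cn R
  | conj : Concept Cn R → Concept Cn R → Concept Cn R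
  | disj : Concept Cn R → Concept Cn R → Concept Cn R
  | ex   : R → Concept Cn R → Concept Cn R
  | all  : R → Concept Cn R → Concept Cn R
  deriving DecidableEq

namespace Concept
variable {Cn R : Type}

/-- `EL` concepts: only ⊤, concept names, ⊓ and ∃r.C. -/
def isEL : Concept Cn R → Prop
  | top => True
  | bot => False
  | name _ => True
  | neg _ => False
  | conj c d => c.isEL ∧ d.isEL
  | disj _ _ => False
  | ex _ c => c.isEL
  | all _ _ => False

/-- `ELU` concepts: additionally allow ⊔. -/
def isELU : Concept Cn R → Prop
  | top => True
  | bot => False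
  | name _ => True
  | neg _ => False
  | conj c d => c.isELU ∧ d.isELU
  | disj c d => c.isELU ∧ d.isELU
  | ex _ c => c.isELU
  | all _ _ => False

/-- `EL⊥` concepts. -/
def isELbot : Concept Cn R → Prop
  | top => True
  | bot => True
  | name _ => True
  | neg _ => False
  | conj c d => c.isELbot ∧ d.isELbot
  | disj _ _ => False
  | ex _ c => c.isELbot
  | all _ _ => False

/-- `ELU⊥` concepts. -/
def isELUbot : Concept Cn R → Prop
  | top => True
  | bot => True
  | name _ => True
  | neg _ => False
  | conj c d => c.isELUbot ∧ d.isELUbot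
  | disj c d => c.isELUbot ∧ d.isELUbot
  | ex _ c => c.isELUbot
  | all _ _ => False

/-- the nesting depth of ∃/∀ restrictions. -/
def depth : Concept Cn R → ℕ
  | top => 0
  | bot => 0
  | name _ => 0
  | neg c => c.depth
  | conj c d => max c.depth d.depth
  | disj c d => max c.depth d.depth
  | ex _ c => c.depth + 1
  | all _ c => c.depth + 1

/-- size of a concept (occurrences of symbols). -/
def size : Concept Cn R → ℕ
  | top => 1
  | bot => 1
  | name _ => 1
  | neg c => c.size + 1
  | conj c d => c.size + d.size + 1
  | disj c d => c.size + d.size + 1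
  | ex _ c => c.size + 2
  | all _ c => c.size + 2

/-- set of subconcepts. -/
def sub : Concept Cn R → Set (Concept Cn R)
  | top => {top}
  | bot => {bot}
  | name A => {name A}
  | neg c => insert (neg c) c.sub
  | conj c d => insert (conj c d) (c.sub ∪ d.sub)
  | disj c d => insert (disj c d) (c.sub ∪ d.sub)
  | ex r c => insert (ex r c) c.sub
  | all r c => insert (all r c) c.sub

/-- concept names occurring in a concept. -/
def names : Concept Cn R → Set Cn
  | top => ∅
  | bot => ∅
  | name A => {A}
  | neg c => c.names
  | conj c d => c.names ∪ d.names
  | disj c d => c.names ∪ d.names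
  | ex _ c => c.names
  | all _ c => c.names

/-- role names occurring in a concept. -/
def roles : Concept Cn R → Set R
  | top => ∅
  | bot => ∅
  | name _ => ∅
  | neg c => c.roles
  | conj c d => c.roles ∪ d.roles
  | disj c d => c.roles ∪ d.roles
  | ex r c => insert r c.roles
  | all r c => insert r c.roles

/-- top-level conjuncts of a concept. -/
def tlConj : Concept Cn R → Set (Concept Cn R)
  | conj c d => c.tlConj ∪ d.tlConj
  | c => {c}

end Concept

/-- n-fold nesting of ∃r applied to a concept. -/
def exN {Cn R : Type} (r : R) : ℕ → Concept Cn R → Concept Cn R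
  | 0, c => c
  | n + 1, c => Concept.ex r (exN r n c)

/-- An interpretation: a domain together with extensions of concept and role names. -/
structure Interp (Cn R : Type) : Type 1 where
  Dom : Type
  cI : Cn → Set Dom
  rI : R → Set (Dom × Dom)

/-- Semantics of concepts. -/
def Interp.interp {Cn R : Type} (I : Interp Cn R) : Concept Cn R → Set I.Dom
  | .top => Set.univ
  | .bot => ∅
  | .name A => I.cI A
  | .neg c => (I.interp c)ᶜ
  | .conj c d => I.interp c ∩ I.interp d
  | .disj c d => I.interp c ∪ I.interp d
  | .ex r c => {x | ∃ y, (x, y) ∈ I.rI r ∧ y ∈ I.interp c}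
  | .all r c => {x | ∀ y, (x, y) ∈ I.rI r → y ∈ I.interp c}

/-- An ontology: a set of concept inclusions `C ⊑ D`, coded as pairs `(C, D)`. -/
abbrev Ontology (Cn R : Type) := Set (Concept Cn R × Concept Cn R)

/-- `I` is a model of the ontology `O`. -/
def Interp.isModel {Cn R : Type} (I : Interp Cn R) (O : Ontology Cn R) : Prop :=
  ∀ ci ∈ O, I.interp ci.1 ⊆ I.interp ci.2

/-- `O ⊨ c ⊑ d`. -/
def entails {Cn R : Type} (O : Ontology Cn R) (c d : Concept Cn R) : Prop :=
  ∀ I : Interp Cn R, I.isModel O → I.interp c ⊆ I.interp d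

/-- logical equivalence (w.r.t. the empty ontology). -/
def lequiv {Cn R : Type} (c d : Concept Cn R) : Prop :=
  entails ∅ c d ∧ entails ∅ d c

/-- set of subconcepts of an ontology. -/
def subO {Cn R : Type} (O : Ontology Cn R) : Set (Concept Cn R) :=
  {F | ∃ ci ∈ O, F ∈ ci.1.sub ∪ ci.2.sub}

/-- concept names of an ontology. -/
def sigC {Cn R : Type} (O : Ontology Cn R) : Set Cn :=
  {A | ∃ ci ∈ O, A ∈ ci.1.names ∪ ci.2.names}

/-- role names of an ontology. -/
def sigR {Cn R : Type} (O : Ontology Cn R) : Set R :=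
  {r | ∃ ci ∈ O, r ∈ ci.1.roles ∪ ci.2.roles}


/- STATEMENT 5: characterization of ontologies with infinitely many pairwise
   non-equivalent O-generatable EL concepts. -/

/-- `∃r₁.⋯.∃rₙ.⊤` for a list of role names. -/
def exChain {Cn R : Type} : List R → Concept Cn R
  | [] => .top
  | r :: l => .ex r (exChain l)

/-- `C` is O-generatable: some `∃r.D ∈ sub(O)` occurring on the right-hand side of an
    inclusion of `O` satisfies `O ⊨ D ⊑ C`. -/
def generatable {Cn R : Type} (O : Ontology Cn R) (C : Concept Cn R) : Prop :=
  ∃ (r : R) (D : Concept Cn R),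
    (∃ ci ∈ O, Concept.ex r D ∈ ci.2.sub) ∧ entails O D C


section Aux

variable {Cn R : Type}

/-! ### Basic lemmas about `lequiv` and `entails` -/

lemma isModel_empty (I : Interp Cn R) : I.isModel (∅ : Ontology Cn R) :=
  fun _ h => h.elim

lemma lequiv_iff {c d : Concept Cn R} :
    lequiv c d ↔ ∀ I : Interp Cn R, I.interp c = I.interp d := by
  constructor
  · rintro ⟨h1, h2⟩ I
    exact Set.Subset.antisymm (h1 I (isModel_empty I)) (h2 I (isModel_empty I))
  · intro h
    exact ⟨fun I _ => (h I).le, fun I _ => (h I).ge⟩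

lemma lequiv_symm {c d : Concept Cn R} (h : lequiv c d) : lequiv d c :=
  ⟨h.2, h.1⟩

lemma lequiv_trans {c d e : Concept Cn R} (h1 : lequiv c d) (h2 : lequiv d e) :
    lequiv c e := by
  rw [lequiv_iff] at *
  exact fun I => (h1 I).trans (h2 I)

lemma entails_trans_empty {O : Ontology Cn R} {c d e : Concept Cn R}
    (h1 : entails O c d) (h2 : entails ∅ d e) : entails O c e :=
  fun I hI => (h1 I hI).trans (h2 I (isModel_empty I))

/-! ### Finiteness of signatures -/

lemma names_finite (c : Concept Cn R) : c.names.Finite := by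
  induction c with
  | top => exact Set.finite_empty
  | bot => exact Set.finite_empty
  | name A => exact Set.finite_singleton A
  | neg c ih => exact ih
  | conj c d ihc ihd => exact ihc.union ihd
  | disj c d ihc ihd => exact ihc.union ihd
  | ex r c ih => exact ih
  | all r c ih => exact ih

lemma roles_finite (c : Concept Cn R) : c.roles.Finite := by
  induction c with
  | top => exact Set.finite_empty
  | bot => exact Set.finite_empty
  | name A => exact Set.finite_empty
  | neg c ih => exact ih
  | conj c d ihc ihd => exact ihc.union ihd
  | disj c d ihc ihd => exact ihc.union ihd
  | ex r c ih => exact ih.insert r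
  | all r c ih => exact ih.insert r

lemma sigC_finite {O : Ontology Cn R} (hfin : O.Finite) : (sigC O).Finite := by
  have : sigC O = ⋃ ci ∈ O, (ci.1.names ∪ ci.2.names) := by
    ext A; simp [sigC]
  rw [this]
  exact hfin.biUnion fun ci _ => (names_finite _).union (names_finite _)

lemma sigR_finite {O : Ontology Cn R} (hfin : O.Finite) : (sigR O).Finite := by
  have : sigR O = ⋃ ci ∈ O, (ci.1.roles ∪ ci.2.roles) := by
    ext r; simp [sigR]
  rw [this]
  exact hfin.biUnion fun ci _ => (roles_finite _).union (roles_finite _)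

/-! ### Subconcepts -/

lemma mem_sub_self (c : Concept Cn R) : c ∈ c.sub := by
  cases c <;> simp [Concept.sub]

lemma mem_sub_ex : ∀ (F : Concept Cn R) {r : R} {D : Concept Cn R},
    Concept.ex r D ∈ F.sub → D ∈ F.sub := by
  intro F
  induction F with
  | top => intro r D h; simp [Concept.sub] at h
  | bot => intro r D h; simp [Concept.sub] at h
  | name A => intro r D h; simp [Concept.sub] at h
  | neg c ih =>
      intro r D h
      simp only [Concept.sub, Set.mem_insert_iff] at h ⊢
      rcases h with h | h
      · exact absurd h (by simp)
      · exact Or.inr (ih h)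
  | conj c d ihc ihd =>
      intro r D h
      simp only [Concept.sub, Set.mem_insert_iff, Set.mem_union] at h ⊢
      rcases h with h | h | h
      · exact absurd h (by simp)
      · exact Or.inr (Or.inl (ihc h))
      · exact Or.inr (Or.inr (ihd h))
  | disj c d ihc ihd =>
      intro r D h
      simp only [Concept.sub, Set.mem_insert_iff, Set.mem_union] at h ⊢
      rcases h with h | h | h
      · exact absurd h (by simp)
      · exact Or.inr (Or.inl (ihc h))
      · exact Or.inr (Or.inr (ihd h))
  | ex r' c ih =>
      intro r D h
      simp only [Concept.sub, Set.mem_insert_iff] at h ⊢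
      rcases h with h | h
      · injection h with h1 h2
        subst h2
        exact Or.inr (mem_sub_self _)
      · exact Or.inr (ih h)
  | all r' c ih =>
      intro r D h
      simp only [Concept.sub, Set.mem_insert_iff] at h ⊢
      rcases h with h | h
      · exact absurd h (by simp)
      · exact Or.inr (ih h)

lemma sub_props : ∀ (F E : Concept Cn R), E ∈ F.sub →
    E.names ⊆ F.names ∧ E.roles ⊆ F.roles ∧ (F.isELU → E.isELU) := by
  intro F
  induction F with
  | top =>
      intro E h
      simp only [Concept.sub, Set.mem_singleton_iff] at h
      subst h; exact ⟨subset_rfl, subset_rfl, fun h => h⟩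
  | bot =>
      intro E h
      simp only [Concept.sub, Set.mem_singleton_iff] at h
      subst h; exact ⟨subset_rfl, subset_rfl, fun h => h⟩
  | name A =>
      intro E h
      simp only [Concept.sub, Set.mem_singleton_iff] at h
      subst h; exact ⟨subset_rfl, subset_rfl, fun h => h⟩
  | neg c ih =>
      intro E h
      simp only [Concept.sub, Set.mem_insert_iff] at h
      rcases h with rfl | h
      · exact ⟨subset_rfl, subset_rfl, fun h => h⟩
      · exact ⟨(ih E h).1, (ih E h).2.1, fun hF => hF.elim⟩
  | conj c d ihc ihd =>
      intro E h
      simp only [Concept.sub, Set.mem_insert_iff, Set.mem_union] at h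
      rcases h with rfl | h | h
      · exact ⟨subset_rfl, subset_rfl, fun h => h⟩
      · exact ⟨(ihc E h).1.trans Set.subset_union_left,
          (ihc E h).2.1.trans Set.subset_union_left, fun hF => (ihc E h).2.2 hF.1⟩
      · exact ⟨(ihd E h).1.trans Set.subset_union_right,
          (ihd E h).2.1.trans Set.subset_union_right, fun hF => (ihd E h).2.2 hF.2⟩
  | disj c d ihc ihd =>
      intro E h
      simp only [Concept.sub, Set.mem_insert_iff, Set.mem_union] at h
      rcases h with rfl | h | h
      · exact ⟨subset_rfl, subset_rfl, fun h => h⟩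
      · exact ⟨(ihc E h).1.trans Set.subset_union_left,
          (ihc E h).2.1.trans Set.subset_union_left, fun hF => (ihc E h).2.2 hF.1⟩
      · exact ⟨(ihd E h).1.trans Set.subset_union_right,
          (ihd E h).2.1.trans Set.subset_union_right, fun hF => (ihd E h).2.2 hF.2⟩
  | ex r c ih =>
      intro E h
      simp only [Concept.sub, Set.mem_insert_iff] at h
      rcases h with rfl | h
      · exact ⟨subset_rfl, subset_rfl, fun h => h⟩
      · exact ⟨(ih E h).1, (ih E h).2.1.trans (Set.subset_insert _ _),
          fun hF => (ih E h).2.2 hF⟩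
  | all r c ih =>
      intro E h
      simp only [Concept.sub, Set.mem_insert_iff] at h
      rcases h with rfl | h
      · exact ⟨subset_rfl, subset_rfl, fun h => h⟩
      · exact ⟨(ih E h).1, (ih E h).2.1.trans (Set.subset_insert _ _),
          fun hF => hF.elim⟩

lemma names_subset_sigC {O : Ontology Cn R} {ci : Concept Cn R × Concept Cn R}
    (hci : ci ∈ O) : ci.2.names ⊆ sigC O :=
  fun A hA => ⟨ci, hci, Or.inr hA⟩

lemma roles_subset_sigR {O : Ontology Cn R} {ci : Concept Cn R × Concept Cn R}
    (hci : ci ∈ O) : ci.2.roles ⊆ sigR O :=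
  fun r hr => ⟨ci, hci, Or.inr hr⟩

/-! ### The one-point interpretation over the signature of O -/

/-- One-point interpretation where a concept (or role) name holds iff it occurs in `O`. -/
def sigI (O : Ontology Cn R) : Interp Cn R :=
  ⟨Unit, fun A => {_u : Unit | A ∈ sigC O}, fun r => {_p : Unit × Unit | r ∈ sigR O}⟩

lemma sigI_interp_elu {O : Ontology Cn R} :
    ∀ c : Concept Cn R, c.isELU → c.names ⊆ sigC O → c.roles ⊆ sigR O →
      (sigI O).interp c = Set.univ := by
  intro c
  induction c with
  | top => intro _ _ _; rfl
  | bot => intro h; exact h.elim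
  | name A =>
      intro _ hn _
      have : A ∈ sigC O := hn rfl
      ext u; simp [sigI, Interp.interp, this]
  | neg c ih => intro h; exact h.elim
  | conj c d ihc ihd =>
      intro hE hn hr
      have h1 := ihc hE.1 (fun A hA => hn (Or.inl hA)) (fun s hs => hr (Or.inl hs))
      have h2 := ihd hE.2 (fun A hA => hn (Or.inr hA)) (fun s hs => hr (Or.inr hs))
      show (sigI O).interp c ∩ (sigI O).interp d = Set.univ
      rw [h1, h2, Set.univ_inter]
  | disj c d ihc ihd =>
      intro hE hn hr
      have h1 := ihc hE.1 (fun A hA => hn (Or.inl hA)) (fun s hs => hr (Or.inl hs))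
      show (sigI O).interp c ∪ (sigI O).interp d = Set.univ
      rw [h1, Set.univ_union]
  | ex r c ih =>
      intro hE hn hr
      have h1 := ih hE hn (fun s hs => hr (Set.mem_insert_of_mem _ hs))
      have hrr : r ∈ sigR O := hr (Set.mem_insert _ _)
      ext u
      simp only [Interp.interp, Set.mem_setOf_eq, Set.mem_univ, iff_true]
      exact ⟨(), by simp [sigI, hrr]; trivial, by rw [h1]; trivial⟩
  | all r c ih => intro h; exact h.elim

lemma sigI_interp_el {O : Ontology Cn R} :
    ∀ c : Concept Cn R, c.isEL →
      (() ∈ (sigI O).interp c ↔ c.names ⊆ sigC O ∧ c.roles ⊆ sigR O) := by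
  intro c
  induction c with
  | top =>
      intro _
      simp [Interp.interp, Concept.names, Concept.roles]; trivial
  | bot => intro h; exact h.elim
  | name A =>
      intro _
      simp [sigI, Interp.interp, Concept.names, Concept.roles,
        Set.singleton_subset_iff]; exact Iff.rfl
  | neg c ih => intro h; exact h.elim
  | conj c d ihc ihd =>
      intro hE
      have h1 := ihc hE.1
      have h2 := ihd hE.2
      show () ∈ (sigI O).interp c ∩ (sigI O).interp d ↔ _
      refine (and_congr h1 h2).trans ?_
      simp only [Concept.names, Concept.roles, Set.union_subset_iff]
      tauto
  | disj c d ihc ihd => intro h; exact h.elim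
  | ex r c ih =>
      intro hE
      have h1 := ih hE
      show (∃ y, ((), y) ∈ (sigI O).rI r ∧ y ∈ (sigI O).interp c) ↔ _
      simp only [Concept.names, Concept.roles, Set.insert_subset_iff]
      constructor
      · rintro ⟨y, hy1, hy2⟩
        have : () ∈ (sigI O).interp c := by cases y; exact hy2
        have h2 := h1.1 this
        exact ⟨h2.1, hy1, h2.2⟩
      · rintro ⟨hn, hrr, hr⟩
        exact ⟨(), hrr, h1.2 ⟨hn, hr⟩⟩
  | all r c ih => intro h; exact h.elim

lemma sigI_isModel {O : Ontology Cn R} (hO : ∀ ci ∈ O, ci.1.isELU ∧ ci.2.isELU) :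
    (sigI O).isModel O := by
  intro ci hci
  rw [sigI_interp_elu ci.2 (hO ci hci).2 (names_subset_sigC hci) (roles_subset_sigR hci)]
  exact Set.subset_univ _

lemma sig_of_entails {O : Ontology Cn R} (hO : ∀ ci ∈ O, ci.1.isELU ∧ ci.2.isELU)
    {D C : Concept Cn R} (hD : D.isELU) (hDn : D.names ⊆ sigC O)
    (hDr : D.roles ⊆ sigR O) (hC : C.isEL) (h : entails O D C) :
    C.names ⊆ sigC O ∧ C.roles ⊆ sigR O := by
  have h1 := h (sigI O) (sigI_isModel hO)
  rw [sigI_interp_elu D hD hDn hDr] at h1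
  exact (sigI_interp_el C hC).1 (h1 (Set.mem_univ ()))

lemma gen_sig {O : Ontology Cn R} (hO : ∀ ci ∈ O, ci.1.isELU ∧ ci.2.isELU)
    {r : R} {D : Concept Cn R} (hsub : ∃ ci ∈ O, Concept.ex r D ∈ ci.2.sub) :
    D.isELU ∧ D.names ⊆ sigC O ∧ D.roles ⊆ sigR O := by
  obtain ⟨ci, hci, hmem⟩ := hsub
  have hDsub : D ∈ ci.2.sub := mem_sub_ex _ hmem
  have hp := sub_props ci.2 D hDsub
  exact ⟨hp.2.2 (hO ci hci).2, hp.1.trans (names_subset_sigC hci),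
    hp.2.1.trans (roles_subset_sigR hci)⟩

/-! ### Big conjunctions and finiteness of EL concepts up to equivalence -/

/-- Conjunction of a list of concepts. -/
def bigConj : List (Concept Cn R) → Concept Cn R
  | [] => .top
  | c :: L => .conj c (bigConj L)

lemma interp_bigConj (I : Interp Cn R) :
    ∀ L : List (Concept Cn R), I.interp (bigConj L) = {x | ∀ c ∈ L, x ∈ I.interp c} := by
  intro L
  induction L with
  | nil => ext x; simp [bigConj, Interp.interp]
  | cons c L ih =>
      ext x
      show x ∈ I.interp c ∩ I.interp (bigConj L) ↔ _
      simp [ih]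

lemma finite_lists {α : Type*} {s : Set α} (hs : s.Finite) :
    ∀ k : ℕ, {L : List α | L.length ≤ k ∧ ∀ a ∈ L, a ∈ s}.Finite := by
  intro k
  induction k with
  | zero =>
      apply Set.Finite.subset (Set.finite_singleton ([] : List α))
      rintro L ⟨h1, _⟩
      simp only [Set.mem_singleton_iff]
      exact List.length_eq_zero_iff.1 (Nat.le_zero.1 h1)
  | succ k ih =>
      apply Set.Finite.subset ((Set.Finite.image2 List.cons hs ih).insert [])
      rintro L ⟨h1, h2⟩
      cases L with
      | nil => exact Set.mem_insert _ _
      | cons a L' =>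
          refine Set.mem_insert_of_mem _ ?_
          exact Set.mem_image2.2 ⟨a, h2 a List.mem_cons_self,
            L', ⟨by simpa using h1, fun b hb => h2 b (List.mem_cons_of_mem _ hb)⟩, rfl⟩

lemma struct_norm {NS : Set Cn} {RS : Set R} {n : ℕ} {Fn : Set (Concept Cn R)}
    (hFn : ∀ c : Concept Cn R, c.isEL → c.names ⊆ NS → c.roles ⊆ RS →
      c.depth + 1 ≤ n → ∃ d ∈ Fn, lequiv c d) :
    ∀ C : Concept Cn R, C.isEL → C.names ⊆ NS → C.roles ⊆ RS → C.depth ≤ n →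
      ∃ L : List (Concept Cn R),
        (∀ a ∈ L, a ∈ Concept.name '' NS ∪ Set.image2 Concept.ex RS Fn) ∧
        lequiv C (bigConj L) := by
  intro C
  induction C with
  | top =>
      intro _ _ _ _
      exact ⟨[], by simp, lequiv_iff.2 fun I => rfl⟩
  | bot => intro h; exact h.elim
  | name A =>
      intro _ hn _ _
      refine ⟨[Concept.name A], ?_, ?_⟩
      · intro a ha
        simp only [List.mem_singleton] at ha
        subst ha
        exact Or.inl ⟨A, hn rfl, rfl⟩
      · rw [lequiv_iff]
        intro I
        ext x
        show x ∈ I.cI A ↔ x ∈ I.interp (bigConj [Concept.name A])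
        rw [interp_bigConj]
        simp [Interp.interp]
  | neg c ih => intro h; exact h.elim
  | conj c d ihc ihd =>
      intro hE hn hr hd
      obtain ⟨L1, hL1, he1⟩ := ihc hE.1 (fun A hA => hn (Or.inl hA))
        (fun s hs => hr (Or.inl hs)) (le_trans (le_max_left _ _) hd)
      obtain ⟨L2, hL2, he2⟩ := ihd hE.2 (fun A hA => hn (Or.inr hA))
        (fun s hs => hr (Or.inr hs)) (le_trans (le_max_right _ _) hd)
      refine ⟨L1 ++ L2, ?_, ?_⟩
      · intro a ha
        rcases List.mem_append.1 ha with h | h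
        · exact hL1 a h
        · exact hL2 a h
      · rw [lequiv_iff]
        intro I
        have e1 := lequiv_iff.1 he1 I
        have e2 := lequiv_iff.1 he2 I
        ext x
        show x ∈ I.interp c ∩ I.interp d ↔ _
        rw [e1, e2, interp_bigConj, interp_bigConj, interp_bigConj]
        simp only [Set.mem_inter_iff, Set.mem_setOf_eq, List.mem_append]
        constructor
        · rintro ⟨h1, h2⟩ a (ha | ha)
          · exact h1 a ha
          · exact h2 a ha
        · intro h
          exact ⟨fun a ha => h a (Or.inl ha), fun a ha => h a (Or.inr ha)⟩
  | disj c d ihc ihd => intro h; exact h.elim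
  | ex r c ih =>
      intro hE hn hr hd
      have hrr : r ∈ RS := hr (Set.mem_insert _ _)
      obtain ⟨d, hdF, hcd⟩ := hFn c hE hn (fun s hs => hr (Set.mem_insert_of_mem _ hs))
        (by simpa [Concept.depth] using hd)
      refine ⟨[Concept.ex r d], ?_, ?_⟩
      · intro a ha
        simp only [List.mem_singleton] at ha
        subst ha
        exact Or.inr (Set.mem_image2.2 ⟨r, hrr, d, hdF, rfl⟩)
      · rw [lequiv_iff]
        intro I
        have e := lequiv_iff.1 hcd I
        ext x
        show (∃ y, (x, y) ∈ I.rI r ∧ y ∈ I.interp c) ↔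
          x ∈ I.interp (bigConj [Concept.ex r d])
        rw [interp_bigConj]
        simp [Interp.interp, e]
  | all r c ih => intro h; exact h.elim

lemma fin_step {NS : Set Cn} {RS : Set R} (hNS : NS.Finite) (hRS : RS.Finite)
    {n : ℕ} {Fn : Set (Concept Cn R)} (hFnfin : Fn.Finite)
    (hFn : ∀ c : Concept Cn R, c.isEL → c.names ⊆ NS → c.roles ⊆ RS →
      c.depth + 1 ≤ n → ∃ d ∈ Fn, lequiv c d) :
    ∃ F : Set (Concept Cn R), F.Finite ∧
      ∀ C : Concept Cn R, C.isEL → C.names ⊆ NS → C.roles ⊆ RS → C.depth ≤ n →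
        ∃ D ∈ F, lequiv C D := by
  classical
  set Atoms : Set (Concept Cn R) :=
    Concept.name '' NS ∪ Set.image2 Concept.ex RS Fn with hAtoms
  have hAfin : Atoms.Finite := (hNS.image _).union (Set.Finite.image2 _ hRS hFnfin)
  set B := hAfin.toFinset.card with hB
  refine ⟨bigConj '' {L | L.length ≤ B ∧ ∀ a ∈ L, a ∈ Atoms},
    (finite_lists hAfin B).image _, ?_⟩
  intro C hEL hn hr hd
  obtain ⟨L, hLmem, hLeq⟩ := struct_norm hFn C hEL hn hr hd
  refine ⟨bigConj L.dedup, ⟨L.dedup, ⟨?_, ?_⟩, rfl⟩, ?_⟩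
  · -- length bound via nodup
    have hsub : L.dedup.toFinset ⊆ hAfin.toFinset := by
      intro a ha
      rw [Set.Finite.mem_toFinset]
      exact hLmem a (List.mem_dedup.1 (List.mem_toFinset.1 ha))
    calc L.dedup.length = L.dedup.toFinset.card :=
          (List.toFinset_card_of_nodup (List.nodup_dedup L)).symm
      _ ≤ B := Finset.card_le_card hsub
  · intro a ha
    exact hLmem a (List.mem_dedup.1 ha)
  · refine lequiv_trans hLeq (lequiv_iff.2 fun I => ?_)
    rw [interp_bigConj, interp_bigConj]
    ext x
    simp [List.mem_dedup]

lemma fin_classes {NS : Set Cn} {RS : Set R} (hNS : NS.Finite) (hRS : RS.Finite) :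
    ∀ n : ℕ, ∃ F : Set (Concept Cn R), F.Finite ∧
      ∀ C : Concept Cn R, C.isEL → C.names ⊆ NS → C.roles ⊆ RS → C.depth ≤ n →
        ∃ D ∈ F, lequiv C D := by
  intro n
  induction n with
  | zero =>
      exact fin_step hNS hRS Set.finite_empty (fun c _ _ _ h => by omega)
  | succ n ih =>
      obtain ⟨Fn, hFnfin, hFn⟩ := ih
      exact fin_step hNS hRS hFnfin
        (fun c h1 h2 h3 h4 => hFn c h1 h2 h3 (by omega))

/-! ### Chains -/

lemma exChain_isEL : ∀ rs : List R, (exChain rs : Concept Cn R).isEL := by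
  intro rs
  induction rs with
  | nil => trivial
  | cons r l ih => exact ih

lemma extract_chain : ∀ C : Concept Cn R, C.isEL → ∀ n : ℕ, n ≤ C.depth →
    ∃ rs : List R, rs.length = n ∧ (∀ s ∈ rs, s ∈ C.roles) ∧
      entails ∅ C (exChain rs) := by
  intro C
  induction C with
  | top =>
      intro _ n hn
      have : n = 0 := Nat.le_zero.1 hn
      subst this
      exact ⟨[], rfl, by simp, fun I _ => subset_rfl⟩
  | bot => intro h; exact h.elim
  | name A =>
      intro _ n hn
      have : n = 0 := Nat.le_zero.1 hn
      subst this
      exact ⟨[], rfl, by simp, fun I _ x _ => Set.mem_univ x⟩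
  | neg c ih => intro h; exact h.elim
  | conj c d ihc ihd =>
      intro hE n hn
      rcases le_max_iff.1 hn with h | h
      · obtain ⟨rs, h1, h2, h3⟩ := ihc hE.1 n h
        refine ⟨rs, h1, fun s hs => Or.inl (h2 s hs), ?_⟩
        intro I hI x hx
        exact h3 I hI hx.1
      · obtain ⟨rs, h1, h2, h3⟩ := ihd hE.2 n h
        refine ⟨rs, h1, fun s hs => Or.inr (h2 s hs), ?_⟩
        intro I hI x hx
        exact h3 I hI hx.2
  | disj c d ihc ihd => intro h; exact h.elim
  | ex r c ih =>
      intro hE n hn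
      cases n with
      | zero => exact ⟨[], rfl, by simp, fun I _ x _ => Set.mem_univ x⟩
      | succ m =>
          obtain ⟨rs, h1, h2, h3⟩ := ih hE m (by simpa [Concept.depth] using hn)
          refine ⟨r :: rs, by simp [h1], ?_, ?_⟩
          · intro s hs
            rcases List.mem_cons.1 hs with rfl | hs
            · exact Set.mem_insert _ _
            · exact Set.mem_insert_of_mem _ (h2 s hs)
          · intro I hI x hx
            obtain ⟨y, hy1, hy2⟩ := hx
            exact ⟨y, hy1, h3 I hI hy2⟩
  | all r c ih => intro h; exact h.elim

/-- Interpretation whose role structure is a chain of length `n`. -/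
def chainI (Cn R : Type) (n : ℕ) : Interp Cn R :=
  ⟨ℕ, fun _ => ∅, fun _ => {p | p.2 = p.1 + 1 ∧ p.1 < n}⟩

lemma chainI_interp {n : ℕ} :
    ∀ (l : List R) (i : ℕ), i ≤ n →
      (i ∈ (chainI Cn R n).interp (exChain l) ↔ i + l.length ≤ n) := by
  intro l
  induction l with
  | nil =>
      intro i hi
      exact ⟨fun _ => by simpa using hi, fun _ => trivial⟩
  | cons r l ih =>
      intro i hi
      constructor
      · rintro ⟨y, ⟨hy1, hy2⟩, hy3⟩
        have hy1' : y = i + 1 := hy1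
        have hy2' : i < n := hy2
        subst hy1'
        have := (ih (i + 1) (by omega)).1 hy3
        simp only [List.length_cons]
        omega
      · intro h
        simp only [List.length_cons] at h
        exact ⟨i + 1, ⟨rfl, by omega⟩, (ih (i + 1) (by omega)).2 (by omega)⟩

lemma chain_not_lequiv {rs rs' : List R} (h : rs.length ≠ rs'.length) :
    ¬ lequiv (exChain rs : Concept Cn R) (exChain rs') := by
  rintro ⟨h1, h2⟩
  rcases Nat.lt_or_ge rs.length rs'.length with hlt | hge
  · have m0 : (0 : ℕ) ∈ (chainI Cn R rs.length).interp (exChain rs) :=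
      (chainI_interp rs 0 (Nat.zero_le _)).2 (by omega)
    have m1 := h1 (chainI Cn R rs.length) (isModel_empty _) m0
    have := (chainI_interp rs' 0 (Nat.zero_le _)).1 m1
    omega
  · have hlt : rs'.length < rs.length := lt_of_le_of_ne hge (fun e => h e.symm)
    have m0 : (0 : ℕ) ∈ (chainI Cn R rs'.length).interp (exChain rs') :=
      (chainI_interp rs' 0 (Nat.zero_le _)).2 (by omega)
    have m1 := h2 (chainI Cn R rs'.length) (isModel_empty _) m0
    have := (chainI_interp rs 0 (Nat.zero_le _)).1 m1
    omega

end Aux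

theorem stmt5 {Cn R : Type} (O : Ontology Cn R) (hfin : O.Finite)
    (hO : ∀ ci ∈ O, ci.1.isELU ∧ ci.2.isELU) :
    (∃ f : ℕ → Concept Cn R,
        (∀ n, (f n).isEL ∧ generatable O (f n)) ∧
        ∀ n m, n ≠ m → ¬ lequiv (f n) (f m)) ↔
    (∀ n : ℕ, ∃ (r : R) (D : Concept Cn R) (rs : List R),
        rs.length = n ∧ (∀ s ∈ rs, s ∈ sigR O) ∧
        (∃ ci ∈ O, Concept.ex r D ∈ ci.2.sub) ∧
        entails O D (exChain rs)) := by
  classical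
  constructor
  · rintro ⟨f, hf, hne⟩ n
    -- signature bounds for each f k
    have hbnd : ∀ k, (f k).names ⊆ sigC O ∧ (f k).roles ⊆ sigR O := by
      intro k
      obtain ⟨r, D, hsub, hent⟩ := (hf k).2
      obtain ⟨hDelu, hDn, hDr⟩ := gen_sig hO hsub
      exact sig_of_entails hO hDelu hDn hDr (hf k).1 hent
    by_cases hdeep : ∃ k, n ≤ (f k).depth
    · obtain ⟨k, hk⟩ := hdeep
      obtain ⟨r, D, hsub, hent⟩ := (hf k).2
      obtain ⟨rs, hlen, hroles, hchain⟩ := extract_chain (f k) (hf k).1 n hk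
      exact ⟨r, D, rs, hlen, fun s hs => (hbnd k).2 (hroles s hs), hsub,
        entails_trans_empty hent hchain⟩
    · exfalso
      push_neg at hdeep
      obtain ⟨F, hFfin, hFcov⟩ := fin_classes (sigC_finite hfin) (sigR_finite hfin) n
      have hrep : ∀ k, ∃ D ∈ F, lequiv (f k) D := fun k =>
        hFcov (f k) (hf k).1 (hbnd k).1 (hbnd k).2 (le_of_lt (hdeep k))
      choose g hg1 hg2 using hrep
      haveI : Finite ↥F := hFfin.to_subtype
      obtain ⟨i, j, hij, he⟩ :=
        Finite.exists_ne_map_eq_of_infinite (fun k => (⟨g k, hg1 k⟩ : ↥F))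
      apply hne i j hij
      have hgij : g i = g j := congrArg Subtype.val he
      exact lequiv_trans (hg2 i) (hgij ▸ lequiv_symm (hg2 j))
  · intro h
    choose r D rs hlen hroles hsub hent using h
    refine ⟨fun n => exChain (rs n),
      fun n => ⟨exChain_isEL _, r n, D n, hsub n, hent n⟩, ?_⟩
    intro n m hnm
    exact chain_not_lequiv (by rw [hlen n, hlen m]; exact hnm)
end DL
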